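/- Let A be a dendriform algebra over a field F of characteristic zero and let X ⊆ A. Then the dendriform subalgebra of A generated by X (the smallest F-subspace of A containing X and closed under ≺ and ≻) is spanned, as an F-vector space, by the evaluations in A of normal tree monomials on X: planar binary trees whose leaves are labeled by elements of X, whose internal nodes are labeled by {≺, ≻}, and whose only allowed left-growth pattern is (≻, ≺), i.e., whenever the left child w of an internal node v is itself an internal node, then v is labeled ≻ and w is labeled ≺. -/
import Mathlib


/-- Operation labels `≺` (prec) and `≻` (succ). -/
inductive DendOp where
  | prec
  | succ
deriving DecidableEq

/-- Planar (full) binary trees with internal nodes labeled by `DendOp` and leaves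
labeled by elements of `A`. -/
inductive DTree (A : Type*) where
  | leaf : A → DTree A
  | node : DendOp → DTree A → DTree A → DTree A

/-- Evaluation of a labeled tree in `A` using operations `p` (for `≺`) and `s` (for `≻`). -/
def DTree.eval {A : Type*} (p s : A → A → A) : DTree A → A
  | .leaf x => x
  | .node DendOp.prec l r => p (l.eval p s) (r.eval p s)
  | .node DendOp.succ l r => s (l.eval p s) (r.eval p s)

/-- All leaf labels of the tree lie in `X`. -/
def DTree.leavesIn {A : Type*} (X : Set A) : DTree A → Prop
  | .leaf x => x ∈ X
  | .node _ l r => l.leavesIn X ∧ r.leavesIn X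

/-- Normality: the only allowed left-growth pattern is `(≻, ≺)`. -/
def DTree.normal {A : Type*} : DTree A → Prop
  | .leaf _ => True
  | .node _ (.leaf _) r => r.normal
  | .node op (.node q a b) r =>
      op = DendOp.succ ∧ q = DendOp.prec ∧ (DTree.node q a b).normal ∧ r.normal

/-! ### Auxiliary material -/

/-- Number of leaves of a tree. -/
def DTree.size {A : Type*} : DTree A → ℕ
  | .leaf _ => 1
  | .node _ l r => l.size + r.size

lemma DTree.size_pos {A : Type*} (t : DTree A) : 1 ≤ t.size := by
  induction t with
  | leaf x => simp [DTree.size]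
  | node op l r ihl ihr => simp only [DTree.size]; omega

/-- A tree is *nice* if it is a leaf or its root is labelled `≺`. -/
def DTree.nice {A : Type*} : DTree A → Prop
  | .leaf _ => True
  | .node DendOp.prec _ _ => True
  | .node DendOp.succ _ _ => False

lemma DTree.normal_node {A : Type*} {op : DendOp} {a b : DTree A}
    (h : (DTree.node op a b).normal) : a.normal ∧ b.normal ∧ a.nice := by
  cases a with
  | leaf x => exact ⟨trivial, h, trivial⟩
  | node q c d =>
    obtain ⟨hop, hq, hn, hr⟩ := h
    subst hq
    exact ⟨hn, hr, trivial⟩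

lemma DTree.normal_prec_left {A : Type*} {a b : DTree A}
    (h : (DTree.node DendOp.prec a b).normal) : ∃ x, a = DTree.leaf x := by
  cases a with
  | leaf x => exact ⟨x, rfl⟩
  | node q c d => exact absurd h.1 (by simp)

lemma DTree.normal_succ_nice {A : Type*} {a v : DTree A}
    (ha : a.normal) (hna : a.nice) (hv : v.normal) :
    (DTree.node DendOp.succ a v).normal := by
  cases a with
  | leaf x => exact hv
  | node q c d =>
    cases q with
    | prec => exact ⟨rfl, rfl, ha, hv⟩
    | succ => exact hna.elim

section Dend

variable {F : Type*} [Field F] {A : Type*} [AddCommGroup A] [Module F A]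
variable (prec succ : A →ₗ[F] A →ₗ[F] A)

/-- Evaluation of a tree with the two dendriform operations. -/
def DTree.dev (t : DTree A) : A :=
  t.eval (fun u v => prec u v) (fun u v => succ u v)

lemma DTree.dev_leaf (x : A) : (DTree.leaf x).dev prec succ = x := rfl

lemma DTree.dev_prec (l r : DTree A) :
    (DTree.node DendOp.prec l r).dev prec succ = prec (l.dev prec succ) (r.dev prec succ) := rfl

lemma DTree.dev_succ (l r : DTree A) :
    (DTree.node DendOp.succ l r).dev prec succ = succ (l.dev prec succ) (r.dev prec succ) := rfl

variable (X : Set A)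

/-- Evaluations of normal monomials. -/
def Sset : Set A :=
  {a : A | ∃ t : DTree A, t.leavesIn X ∧ t.normal ∧ t.dev prec succ = a}

/-- Evaluations of nice normal monomials. -/
def Nset : Set A :=
  {a : A | ∃ t : DTree A, t.leavesIn X ∧ t.normal ∧ t.nice ∧ t.dev prec succ = a}

lemma Nset_subset_Sset : Nset prec succ X ⊆ Sset prec succ X := by
  rintro _ ⟨t, hl, hn, _, rfl⟩
  exact ⟨t, hl, hn, rfl⟩

lemma span_N_le_span_S :
    Submodule.span F (Nset prec succ X) ≤ Submodule.span F (Sset prec succ X) :=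
  Submodule.span_mono (Nset_subset_Sset prec succ X)

/-- Multiplying a nice normal monomial on the left by `≻` into the span. -/
lemma succ_nice_left {a : DTree A} (ha : a.normal) (hna : a.nice) (hla : a.leavesIn X)
    {w : A} (hw : w ∈ Submodule.span F (Sset prec succ X)) :
    succ (a.dev prec succ) w ∈ Submodule.span F (Sset prec succ X) := by
  have hmem : succ (a.dev prec succ) w ∈
      Submodule.map (succ (a.dev prec succ)) (Submodule.span F (Sset prec succ X)) :=
    Submodule.mem_map_of_mem hw
  rw [Submodule.map_span] at hmem
  refine Submodule.span_le.mpr ?_ hmem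
  rintro _ ⟨_, ⟨v, hlv, hnv, rfl⟩, rfl⟩
  exact Submodule.subset_span
    ⟨DTree.node DendOp.succ a v, ⟨hla, hlv⟩, DTree.normal_succ_nice ha hna hnv, rfl⟩

/-- `≻` of a span of nice normal monomials with a normal monomial. -/
lemma succ_nice_right {u : DTree A} (hu : u.normal) (hlu : u.leavesIn X)
    {w : A} (hw : w ∈ Submodule.span F (Nset prec succ X)) :
    succ w (u.dev prec succ) ∈ Submodule.span F (Sset prec succ X) := by
  have hmem : succ.flip (u.dev prec succ) w ∈
      Submodule.map (succ.flip (u.dev prec succ)) (Submodule.span F (Nset prec succ X)) :=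
    Submodule.mem_map_of_mem hw
  rw [Submodule.map_span] at hmem
  have : succ w (u.dev prec succ) = succ.flip (u.dev prec succ) w := rfl
  rw [this]
  refine Submodule.span_le.mpr ?_ hmem
  rintro _ ⟨_, ⟨v, hlv, hnv, hnice, rfl⟩, rfl⟩
  refine Submodule.subset_span ⟨DTree.node DendOp.succ v u, ⟨hlv, hlu⟩,
    DTree.normal_succ_nice hnv hnice hu, ?_⟩
  rfl

/-- `≺` with a leaf on the left lands in the span of nice normal monomials. -/
lemma prec_leaf_left {x : A} (hx : x ∈ X)
    {w : A} (hw : w ∈ Submodule.span F (Sset prec succ X)) :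
    prec x w ∈ Submodule.span F (Nset prec succ X) := by
  have hmem : prec x w ∈
      Submodule.map (prec x) (Submodule.span F (Sset prec succ X)) :=
    Submodule.mem_map_of_mem hw
  rw [Submodule.map_span] at hmem
  refine Submodule.span_le.mpr ?_ hmem
  rintro _ ⟨_, ⟨v, hlv, hnv, rfl⟩, rfl⟩
  exact Submodule.subset_span
    ⟨DTree.node DendOp.prec (DTree.leaf x) v, ⟨hx, hlv⟩, hnv, trivial, rfl⟩

/-- Main rewriting lemma, by strong induction on the total number of leaves. -/
lemma dend_main
    (h1 : ∀ x y z : A, prec (succ x y) z = succ x (prec y z))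
    (h2 : ∀ x y z : A, prec (prec x y) z = prec x (prec y z) + prec x (succ y z))
    (h3 : ∀ x y z : A, succ x (succ y z) = succ (prec x y) z + succ (succ x y) z) :
    ∀ n : ℕ, ∀ t u : DTree A, t.size + u.size ≤ n →
      t.leavesIn X → u.leavesIn X → t.normal → u.normal →
      prec (t.dev prec succ) (u.dev prec succ) ∈ Submodule.span F (Sset prec succ X) ∧
      succ (t.dev prec succ) (u.dev prec succ) ∈ Submodule.span F (Sset prec succ X) ∧
      (t.nice → prec (t.dev prec succ) (u.dev prec succ) ∈
        Submodule.span F (Nset prec succ X)) := by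
  intro n
  induction n using Nat.strong_induction_on with
  | _ n ih =>
    intro t u hsz hlt hlu hnt hnu
    cases t with
    | leaf x =>
      have hp : prec ((DTree.leaf x).dev prec succ) (u.dev prec succ) ∈
          Submodule.span F (Nset prec succ X) :=
        Submodule.subset_span
          ⟨DTree.node DendOp.prec (DTree.leaf x) u, ⟨hlt, hlu⟩, hnu, trivial, rfl⟩
      refine ⟨span_N_le_span_S prec succ X hp, ?_, fun _ => hp⟩
      exact Submodule.subset_span
        ⟨DTree.node DendOp.succ (DTree.leaf x) u, ⟨hlt, hlu⟩, hnu, rfl⟩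
    | node op a b =>
      obtain ⟨hna, hnb, hnicea⟩ := DTree.normal_node hnt
      obtain ⟨hla, hlb⟩ := hlt
      have hsa := a.size_pos
      have hsb := b.size_pos
      have hsu := u.size_pos
      have hszt : (DTree.node op a b).size = a.size + b.size := rfl
      have hbu : b.size + u.size < n := by rw [hszt] at hsz; omega
      have hab : a.size + b.size < n := by rw [hszt] at hsz; omega
      obtain ⟨Pbu, Sbu, _⟩ := ih _ hbu b u le_rfl hlb hlu hnb hnu
      cases op with
      | prec =>
        obtain ⟨x, rfl⟩ := DTree.normal_prec_left hnt
        -- prec (prec x eb) eu = prec x (prec eb eu) + prec x (succ eb eu)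
        have hp : prec ((DTree.node DendOp.prec (DTree.leaf x) b).dev prec succ)
            (u.dev prec succ) ∈ Submodule.span F (Nset prec succ X) := by
          rw [DTree.dev_prec, h2]
          exact Submodule.add_mem _ (prec_leaf_left prec succ X hla Pbu)
            (prec_leaf_left prec succ X hla Sbu)
        refine ⟨span_N_le_span_S prec succ X hp, ?_, fun _ => hp⟩
        exact Submodule.subset_span
          ⟨DTree.node DendOp.succ (DTree.node DendOp.prec (DTree.leaf x) b) u,
            ⟨⟨hla, hlb⟩, hlu⟩, DTree.normal_succ_nice hnt trivial hnu, rfl⟩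
      | succ =>
        refine ⟨?_, ?_, fun h => h.elim⟩
        · -- prec (succ ea eb) eu = succ ea (prec eb eu)
          rw [DTree.dev_succ, h1]
          exact succ_nice_left prec succ X hna hnicea hla Pbu
        · -- succ (succ ea eb) eu = succ ea (succ eb eu) - succ (prec ea eb) eu
          have heq : succ ((DTree.node DendOp.succ a b).dev prec succ) (u.dev prec succ) =
              succ (a.dev prec succ) (succ (b.dev prec succ) (u.dev prec succ)) -
              succ (prec (a.dev prec succ) (b.dev prec succ)) (u.dev prec succ) := by
            rw [DTree.dev_succ, h3]
            abel
          rw [heq]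
          refine Submodule.sub_mem _ ?_ ?_
          · exact succ_nice_left prec succ X hna hnicea hla Sbu
          · obtain ⟨_, _, Nab⟩ := ih _ hab a b le_rfl hla hlb hna hnb
            exact succ_nice_right prec succ X hnu hlu (Nab hnicea)

lemma dev_mem_of_closed {p : Submodule F A}
    (hX : X ⊆ p) (hcl : ∀ a ∈ p, ∀ b ∈ p, prec a b ∈ p ∧ succ a b ∈ p)
    (t : DTree A) (hl : t.leavesIn X) : t.dev prec succ ∈ p := by
  induction t with
  | leaf x => exact hX hl
  | node op l r ihl ihr =>
    cases op with
    | prec => exact (hcl _ (ihl hl.1) _ (ihr hl.2)).1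
    | succ => exact (hcl _ (ihl hl.1) _ (ihr hl.2)).2

end Dend

/-- in a dendriform algebra `A` over a field of characteristic zero, the
dendriform subalgebra generated by `X ⊆ A` (the smallest subspace containing `X` and
closed under `≺` and `≻`) is spanned by the evaluations of normal tree monomials on
`X`. -/
theorem dendriform_subalgebra_spanned_by_normal_monomials
    (F : Type*) [Field F] [CharZero F]
    (A : Type*) [AddCommGroup A] [Module F A]
    (prec succ : A →ₗ[F] A →ₗ[F] A)
    (h1 : ∀ x y z : A, prec (succ x y) z = succ x (prec y z))
    (h2 : ∀ x y z : A, prec (prec x y) z = prec x (prec y z) + prec x (succ y z))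
    (h3 : ∀ x y z : A, succ x (succ y z) = succ (prec x y) z + succ (succ x y) z)
    (X : Set A) :
    sInf {p : Submodule F A |
        X ⊆ p ∧ ∀ a ∈ p, ∀ b ∈ p, prec a b ∈ p ∧ succ a b ∈ p} =
      Submodule.span F
        {a : A | ∃ t : DTree A, t.leavesIn X ∧ t.normal ∧
          t.eval (fun u v => prec u v) (fun u v => succ u v) = a} := by
  have hset : {a : A | ∃ t : DTree A, t.leavesIn X ∧ t.normal ∧
      t.eval (fun u v => prec u v) (fun u v => succ u v) = a} = Sset prec succ X := rfl
  rw [hset]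
  apply le_antisymm
  · -- sInf ≤ span : the span itself is a closed subspace containing X
    apply sInf_le
    constructor
    · intro x hx
      exact Submodule.subset_span ⟨DTree.leaf x, hx, trivial, rfl⟩
    · intro a ha b hb
      have key : ∀ c ∈ Sset prec succ X, ∀ d ∈ Sset prec succ X,
          prec c d ∈ Submodule.span F (Sset prec succ X) ∧
          succ c d ∈ Submodule.span F (Sset prec succ X) := by
        rintro _ ⟨t, hlt, hnt, rfl⟩ _ ⟨u, hlu, hnu, rfl⟩
        obtain ⟨hp, hs, _⟩ := dend_main prec succ X h1 h2 h3 (t.size + u.size) t u le_rfl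
          hlt hlu hnt hnu
        exact ⟨hp, hs⟩
      constructor
      · have hm : prec a b ∈ Submodule.map₂ prec (Submodule.span F (Sset prec succ X))
            (Submodule.span F (Sset prec succ X)) := Submodule.apply_mem_map₂ _ ha hb
        rw [Submodule.map₂_span_span] at hm
        refine Submodule.span_le.mpr ?_ hm
        rintro _ ⟨c, hc, d, hd, rfl⟩
        exact (key c hc d hd).1
      · have hm : succ a b ∈ Submodule.map₂ succ (Submodule.span F (Sset prec succ X))
            (Submodule.span F (Sset prec succ X)) := Submodule.apply_mem_map₂ _ ha hb
        rw [Submodule.map₂_span_span] at hm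
        refine Submodule.span_le.mpr ?_ hm
        rintro _ ⟨c, hc, d, hd, rfl⟩
        exact (key c hc d hd).2
  · -- span ≤ sInf : every monomial evaluation lies in each closed subspace
    refine le_sInf ?_
    rintro p ⟨hX, hcl⟩
    refine Submodule.span_le.mpr ?_
    rintro _ ⟨t, hlt, _, rfl⟩
    exact dev_mem_of_closed prec succ X hX hcl t hlt
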